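/- For any set Z equipped with a well order, the well order ≤_PD is a monomial order on the free Ω-operated semigroup 𝔖(Z). -/

import Mathlib

/-! # Common setup: free Ω-operated semigroups/monoids (Ω = {D,P}),
degrees, orders, Gröbner–Shirshov machinery. -/

set_option maxHeartbeats 1000000
set_option linter.unusedSectionVars false

noncomputable section

universe u v w

/-! ## The free Ω-operated semigroup 𝔖(Z) -/

mutual
/-- Atoms: letters of `Z`, or bracketed words `⌊u⌋_D`, `⌊u⌋_P`. -/
inductive OpAtom (Z : Type u) : Type u
  | letter : Z → OpAtom Z
  | brD : OpWord Z → OpAtom Z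
  | brP : OpWord Z → OpAtom Z
/-- Elements of the free Ω-operated semigroup 𝔖(Z): nonempty words in atoms. -/
inductive OpWord (Z : Type u) : Type u
  | single : OpAtom Z → OpWord Z
  | cons : OpAtom Z → OpWord Z → OpWord Z
end

namespace OpWord

def mul {Z : Type u} : OpWord Z → OpWord Z → OpWord Z
  | .single a, w => .cons a w
  | .cons a u, w => .cons a (mul u w)

instance {Z : Type u} : Mul (OpWord Z) := ⟨mul⟩

theorem mul_assoc' {Z : Type u} : ∀ u v w : OpWord Z, (u * v) * w = u * (v * w)
  | .single _, _, _ => rfl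
  | .cons a u, v, w => congrArg (OpWord.cons a) (mul_assoc' u v w)

instance {Z : Type u} : Semigroup (OpWord Z) := { mul_assoc := mul_assoc' }

/-- The operator `u ↦ ⌊u⌋_D` on 𝔖(Z). -/
def opD {Z : Type u} (u : OpWord Z) : OpWord Z := .single (.brD u)
/-- The operator `u ↦ ⌊u⌋_P` on 𝔖(Z). -/
def opP {Z : Type u} (u : OpWord Z) : OpWord Z := .single (.brP u)
/-- The letter `z` as a word. -/
def ofL {Z : Type u} (z : Z) : OpWord Z := .single (.letter z)

end OpWord

/-! ## Degrees -/

mutual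
  /-- number of occurrences of `⌊·⌋_D` -/
  def atomDegD {Z : Type u} : OpAtom Z → ℕ
    | .letter _ => 0
    | .brD w => wordDegD w + 1
    | .brP w => wordDegD w
  def wordDegD {Z : Type u} : OpWord Z → ℕ
    | .single a => atomDegD a
    | .cons a w => atomDegD a + wordDegD w
end

mutual
  /-- number of occurrences of `⌊·⌋_P` -/
  def atomDegP {Z : Type u} : OpAtom Z → ℕ
    | .letter _ => 0
    | .brD w => wordDegP w
    | .brP w => wordDegP w + 1
  def wordDegP {Z : Type u} : OpWord Z → ℕ
    | .single a => atomDegP a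
    | .cons a w => atomDegP a + wordDegP w
end

mutual
  /-- number of occurrences of letters of `Z`, with multiplicity -/
  def atomDegZ {Z : Type u} : OpAtom Z → ℕ
    | .letter _ => 1
    | .brD w => wordDegZ w
    | .brP w => wordDegZ w
  def wordDegZ {Z : Type u} : OpWord Z → ℕ
    | .single a => atomDegZ a
    | .cons a w => atomDegZ a + wordDegZ w
end

mutual
  /-- The GD-degree: each right half bracket `⌋_D` contributes the number of
  `Z`-letters strictly to its right. -/
  def atomDegGD {Z : Type u} : OpAtom Z → ℕ
    | .letter _ => 0
    | .brD w => wordDegGD w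
    | .brP w => wordDegGD w
  def wordDegGD {Z : Type u} : OpWord Z → ℕ
    | .single a => atomDegGD a
    | .cons a w => atomDegGD a + wordDegGD w + atomDegD a * wordDegZ w
end

mutual
  /-- The GP-degree: each bracket `⌊·⌋_P` enclosing `i` of the `n` `Z`-letters
  contributes `n - i`, i.e. the number of `Z`-letters it does not enclose. -/
  def atomDegGP {Z : Type u} : OpAtom Z → ℕ
    | .letter _ => 0
    | .brD w => wordDegGP w
    | .brP w => wordDegGP w
  def wordDegGP {Z : Type u} : OpWord Z → ℕ
    | .single a => atomDegGP a
    | .cons a w => atomDegGP a + wordDegGP w + atomDegP a * wordDegZ w + wordDegP w * atomDegZ a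
end

/-- The breadth: number of top-level atoms. -/
def OpWord.breadth {Z : Type u} : OpWord Z → ℕ
  | .single _ => 1
  | .cons _ w => 1 + breadth w

/-! ## The order ≤_Dlex -/

mutual
  /-- order on atoms: letters < D-brackets < P-brackets, letters compared via the
  order of `Z`, brackets via the (recursive) order `Dlex` of the enclosed words. -/
  def atomDlexLt {Z : Type u} [LT Z] : OpAtom Z → OpAtom Z → Prop
    | .letter a, .letter b => a < b
    | .letter _, .brD _ => True
    | .letter _, .brP _ => True
    | .brD _, .letter _ => False
    | .brD u, .brD v =>
        OpWord.breadth u < OpWord.breadth v ∨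
          (OpWord.breadth u = OpWord.breadth v ∧ wordLexLt u v)
    | .brD _, .brP _ => True
    | .brP _, .letter _ => False
    | .brP _, .brD _ => False
    | .brP u, .brP v =>
        OpWord.breadth u < OpWord.breadth v ∨
          (OpWord.breadth u = OpWord.breadth v ∧ wordLexLt u v)
  /-- pure lexicographic comparison of the atom sequences (used for words of equal breadth) -/
  def wordLexLt {Z : Type u} [LT Z] : OpWord Z → OpWord Z → Prop
    | .single a, .single b => atomDlexLt a b
    | .single a, .cons b _ => atomDlexLt a b
    | .cons a _, .single b => atomDlexLt a b
    | .cons a u, .cons b v => atomDlexLt a b ∨ (a = b ∧ wordLexLt u v)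
end

/-- The strict degree-lexicographic order `<_Dlex` on 𝔖(Z): first by breadth, then
lexicographically. -/
def dlexLt {Z : Type u} [LT Z] (u v : OpWord Z) : Prop :=
  OpWord.breadth u < OpWord.breadth v ∨
    (OpWord.breadth u = OpWord.breadth v ∧ wordLexLt u v)

/-! ## The order ≤_PD -/

/-- The strict order `<_PD`: lexicographic combination of the comparisons of
`deg_D`, `deg_P`, `deg_Z`, `deg_GD`, `deg_GP` and finally `<_Dlex`. -/
def pdLt {Z : Type u} [LT Z] (u v : OpWord Z) : Prop :=
  wordDegD u < wordDegD v ∨ (wordDegD u = wordDegD v ∧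
  (wordDegP u < wordDegP v ∨ (wordDegP u = wordDegP v ∧
  (wordDegZ u < wordDegZ v ∨ (wordDegZ u = wordDegZ v ∧
  (wordDegGD u < wordDegGD v ∨ (wordDegGD u = wordDegGD v ∧
  (wordDegGP u < wordDegGP v ∨ (wordDegGP u = wordDegGP v ∧
  dlexLt u v)))))))))

/-- The order `≤_PD` on 𝔖(Z). -/
def pdLe {Z : Type u} [LT Z] (u v : OpWord Z) : Prop :=
  pdLt u v ∨ u = v

/-! ## Generic order-theoretic predicates -/

/-- `le` is a pre-linear order (reflexive, transitive, total preorder) satisfying the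
descending chain condition: any descending chain is eventually order-equivalent. -/
def IsPrelinearDCC {X : Type u} (le : X → X → Prop) : Prop :=
  (∀ x, le x x) ∧
  (∀ x y z, le x y → le y z → le x z) ∧
  (∀ x y, le x y ∨ le y x) ∧
  (∀ f : ℕ → X, (∀ n, le (f (n + 1)) (f n)) →
    ∃ N, ∀ n, N ≤ n → le (f n) (f (n + 1)) ∧ le (f (n + 1)) (f n))

/-- `le` is a linear order: reflexive, transitive, antisymmetric and total. -/
def IsLinOrderRel {X : Type u} (le : X → X → Prop) : Prop :=
  (∀ x, le x x) ∧
  (∀ x y z, le x y → le y z → le x z) ∧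
  (∀ x y, le x y → le y x → x = y) ∧
  (∀ x y, le x y ∨ le y x)

/-- `le` is a well order: a linear order in which every descending chain stabilizes. -/
def IsLinWellOrder {X : Type u} (le : X → X → Prop) : Prop :=
  IsLinOrderRel le ∧
  ∀ f : ℕ → X, (∀ n, le (f (n + 1)) (f n)) → ∃ N, ∀ n, N ≤ n → f n = f N

/-- the strict relation associated to `le`. -/
def ltOf {X : Type u} (le : X → X → Prop) (a b : X) : Prop := le a b ∧ a ≠ b

/-! ## Contexts (elements of 𝔖⋆(Z)) and substitution -/

mutual
  /-- number of occurrences of the star `⋆` (the letter `none`). -/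
  def atomSCount {Z : Type u} : OpAtom (Option Z) → ℕ
    | .letter none => 1
    | .letter (some _) => 0
    | .brD w => wordSCount w
    | .brP w => wordSCount w
  def wordSCount {Z : Type u} : OpWord (Option Z) → ℕ
    | .single a => atomSCount a
    | .cons a w => atomSCount a + wordSCount w
end

mutual
  /-- evaluation of a word over the alphabet `X` under an assignment `σ : X → 𝔖(Z)`. -/
  def atomSEval {X : Type v} {Z : Type u} (σ : X → OpWord Z) : OpAtom X → OpWord Z
    | .letter x => σ x
    | .brD w => OpWord.opD (wordSEval σ w)
    | .brP w => OpWord.opP (wordSEval σ w)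
  def wordSEval {X : Type v} {Z : Type u} (σ : X → OpWord Z) : OpWord X → OpWord Z
    | .single a => atomSEval σ a
    | .cons a w => OpWord.mul (atomSEval σ a) (wordSEval σ w)
end

/-- `substS q u` is `q|_u` : replace the star `⋆` in `q` by `u`. -/
def substS {Z : Type u} (q : OpWord (Option Z)) (u : OpWord Z) : OpWord Z :=
  wordSEval (fun oz => match oz with | some z => OpWord.ofL z | none => u) q

mutual
  /-- number of occurrences of the letter `x`. -/
  def atomLCount {X : Type v} [DecidableEq X] (x : X) : OpAtom X → ℕ
    | .letter y => if y = x then 1 else 0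
    | .brD w => wordLCount x w
    | .brP w => wordLCount x w
  def wordLCount {X : Type v} [DecidableEq X] (x : X) : OpWord X → ℕ
    | .single a => atomLCount x a
    | .cons a w => atomLCount x a + wordLCount x w
end

/-- words with no occurrence of a bracket (elements of the free semigroup S(Z) ⊆ 𝔖(Z)). -/
def atomPlain {Z : Type u} : OpAtom Z → Prop
  | .letter _ => True
  | .brD _ => False
  | .brP _ => False

def wordPlain {Z : Type u} : OpWord Z → Prop
  | .single a => atomPlain a
  | .cons a w => atomPlain a ∧ wordPlain w

mutual
  /-- functorial relabelling of letters. -/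
  def atomMap {Z : Type u} {W : Type v} (f : Z → W) : OpAtom Z → OpAtom W
    | .letter z => .letter (f z)
    | .brD w => .brD (wordMap f w)
    | .brP w => .brP (wordMap f w)
  def wordMap {Z : Type u} {W : Type v} (f : Z → W) : OpWord Z → OpWord W
    | .single a => .single (atomMap f a)
    | .cons a w => .cons (atomMap f a) (wordMap f w)
end
/-! ## The free Ω-operated monoid 𝔐(Z) = 𝔖(Z′) ⊔ {1}, Z′ = Z ⊔ {†_P, †_D} -/

/-- The extended alphabet `Z′ = Z ⊔ {†_P, †_D}`, where `†_P = ⌊1⌋_P`, `†_D = ⌊1⌋_D`;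
ordered by `†_D < z < †_P`. -/
inductive UL (Z : Type u) : Type u
  | dagD : UL Z
  | ofZ : Z → UL Z
  | dagP : UL Z

instance {Z : Type u} [LT Z] : LT (UL Z) :=
  ⟨fun a b =>
    match a, b with
    | .dagD, .dagD => False
    | .dagD, _ => True
    | .ofZ _, .dagD => False
    | .ofZ x, .ofZ y => x < y
    | .ofZ _, .dagP => True
    | .dagP, _ => False⟩

/-- The free Ω-operated monoid 𝔐(Z), realized as 𝔖(Z ⊔ {†_P, †_D}) ⊔ {1}. -/
inductive MWord (Z : Type u) : Type u
  | one : MWord Z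
  | ofW : OpWord (UL Z) → MWord Z

namespace MWord

def mul {Z : Type u} : MWord Z → MWord Z → MWord Z
  | .one, y => y
  | .ofW u, .one => .ofW u
  | .ofW u, .ofW v => .ofW (u * v)

instance {Z : Type u} : Mul (MWord Z) := ⟨mul⟩
instance {Z : Type u} : One (MWord Z) := ⟨MWord.one⟩

theorem mul_assoc' {Z : Type u} : ∀ a b c : MWord Z, a * b * c = a * (b * c)
  | .one, _, _ => rfl
  | .ofW _, .one, _ => rfl
  | .ofW _, .ofW _, .one => rfl
  | .ofW u, .ofW v, .ofW w => congrArg MWord.ofW (OpWord.mul_assoc' u v w)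

instance {Z : Type u} : Monoid (MWord Z) where
  mul_assoc := mul_assoc'
  one_mul _ := rfl
  mul_one a := by cases a <;> rfl

/-- The operator `u ↦ ⌊u⌋_D` on 𝔐(Z); `⌊1⌋_D = †_D`. -/
def opD {Z : Type u} : MWord Z → MWord Z
  | .one => .ofW (.single (.letter .dagD))
  | .ofW u => .ofW (.single (.brD u))

/-- The operator `u ↦ ⌊u⌋_P` on 𝔐(Z); `⌊1⌋_P = †_P`. -/
def opP {Z : Type u} : MWord Z → MWord Z
  | .one => .ofW (.single (.letter .dagP))
  | .ofW u => .ofW (.single (.brP u))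

/-- The letter `z` as an element of 𝔐(Z). -/
def ofL {Z : Type u} (z : Z) : MWord Z := .ofW (.single (.letter (.ofZ z)))

/-- The breadth, with `|1| = 0`. -/
def breadth {Z : Type u} : MWord Z → ℕ
  | .one => 0
  | .ofW u => OpWord.breadth u

end MWord

/-- plainness over the extended alphabet: atoms are genuine letters of `Z`. -/
def atomPlainM {Z : Type u} : OpAtom (UL Z) → Prop
  | .letter (.ofZ _) => True
  | _ => False

def wordPlainM {Z : Type u} : OpWord (UL Z) → Prop
  | .single a => atomPlainM a
  | .cons a w => atomPlainM a ∧ wordPlainM w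

/-- plain elements of 𝔐(Z): the image of the free monoid M(Z) ⊆ 𝔐(Z). -/
def MWord.isPlain {Z : Type u} : MWord Z → Prop
  | .one => True
  | .ofW u => wordPlainM u

/-! ## The order ≤_uPD -/

mutual
  /-- `deg_P` for the unital setting: `deg_P(†_P) = 1`. -/
  def atomUDegP {Z : Type u} : OpAtom (UL Z) → ℕ
    | .letter .dagP => 1
    | .letter _ => 0
    | .brD w => wordUDegP w
    | .brP w => wordUDegP w + 1
  def wordUDegP {Z : Type u} : OpWord (UL Z) → ℕ
    | .single a => atomUDegP a
    | .cons a w => atomUDegP a + wordUDegP w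
end

/-- The strict order `<_PD` on 𝔖(Z′), where `deg_P(†_P) = 1` and `deg_GP(†_P) = 0`. -/
def updLtW {Z : Type u} [LT Z] (u v : OpWord (UL Z)) : Prop :=
  wordDegD u < wordDegD v ∨ (wordDegD u = wordDegD v ∧
  (wordUDegP u < wordUDegP v ∨ (wordUDegP u = wordUDegP v ∧
  (wordDegZ u < wordDegZ v ∨ (wordDegZ u = wordDegZ v ∧
  (wordDegGD u < wordDegGD v ∨ (wordDegGD u = wordDegGD v ∧
  (wordDegGP u < wordDegGP v ∨ (wordDegGP u = wordDegGP v ∧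
  dlexLt u v)))))))))

/-- The order `≤_uPD` on 𝔐(Z) = 𝔖(Z′) ⊔ {1} : it restricts to `≤_PD` on 𝔖(Z′) and
`1` is the smallest element. -/
def updLe {Z : Type u} [LT Z] : MWord Z → MWord Z → Prop
  | .one, _ => True
  | .ofW _, .one => False
  | .ofW u, .ofW v => updLtW u v ∨ u = v

/-! ## Contexts in 𝔐⋆(Z), substitution and evaluation -/

mutual
  /-- number of occurrences of the star `⋆` (the letter `ofZ none`). -/
  def atomMSCount {Z : Type u} : OpAtom (UL (Option Z)) → ℕ
    | .letter (.ofZ none) => 1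
    | .letter _ => 0
    | .brD w => wordMSCount w
    | .brP w => wordMSCount w
  def wordMSCount {Z : Type u} : OpWord (UL (Option Z)) → ℕ
    | .single a => atomMSCount a
    | .cons a w => atomMSCount a + wordMSCount w
end

def MWord.mscount {Z : Type u} : MWord (Option Z) → ℕ
  | .one => 0
  | .ofW w => wordMSCount w

mutual
  /-- evaluation of a word over the alphabet `X` under `σ : X → 𝔐(Z)`. -/
  def atomMEval {X : Type v} {Z : Type u} (σ : X → MWord Z) : OpAtom (UL X) → MWord Z
    | .letter (.ofZ x) => σ x
    | .letter .dagP => MWord.opP 1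
    | .letter .dagD => MWord.opD 1
    | .brD w => MWord.opD (wordMEval σ w)
    | .brP w => MWord.opP (wordMEval σ w)
  def wordMEval {X : Type v} {Z : Type u} (σ : X → MWord Z) : OpWord (UL X) → MWord Z
    | .single a => atomMEval σ a
    | .cons a w => atomMEval σ a * wordMEval σ w
end

/-- evaluation on 𝔐(X). -/
def MWord.meval {X : Type v} {Z : Type u} (σ : X → MWord Z) : MWord X → MWord Z
  | .one => 1
  | .ofW w => wordMEval σ w

/-- `msubst q u` is `q|_u` : replace the star `⋆` in `q ∈ 𝔐(Z ∪ {⋆})` by `u ∈ 𝔐(Z)`. -/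
def MWord.msubst {Z : Type u} (q : MWord (Option Z)) (u : MWord Z) : MWord Z :=
  q.meval (fun oz => match oz with | some z => MWord.ofL z | none => u)

mutual
  /-- number of occurrences of the letter `x ∈ X` in a word over `X′`. -/
  def atomMLCount {X : Type v} [DecidableEq X] (x : X) : OpAtom (UL X) → ℕ
    | .letter (.ofZ y) => if y = x then 1 else 0
    | .letter _ => 0
    | .brD w => wordMLCount x w
    | .brP w => wordMLCount x w
  def wordMLCount {X : Type v} [DecidableEq X] (x : X) : OpWord (UL X) → ℕ
    | .single a => atomMLCount x a
    | .cons a w => atomMLCount x a + wordMLCount x w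
end

def MWord.mlcount {X : Type v} [DecidableEq X] (x : X) : MWord X → ℕ
  | .one => 0
  | .ofW w => wordMLCount x w
/-! ## Monomial orders -/

/-- A monomial order on 𝔖(Z): a well order such that `u < v` implies `q|_u < q|_v`
for every context `q ∈ 𝔖⋆(Z)`. -/
def IsMonomialOrderS {Z : Type u} (le : OpWord Z → OpWord Z → Prop) : Prop :=
  IsLinWellOrder le ∧
  ∀ q : OpWord (Option Z), wordSCount q = 1 →
    ∀ u v : OpWord Z, ltOf le u v → ltOf le (substS q u) (substS q v)

/-- A monomial order on 𝔐(Z). -/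
def IsMonomialOrderM {Z : Type u} (le : MWord Z → MWord Z → Prop) : Prop :=
  IsLinWellOrder le ∧
  ∀ q : MWord (Option Z), MWord.mscount q = 1 →
    ∀ u v : MWord Z, ltOf le u v → ltOf le (MWord.msubst q u) (MWord.msubst q v)

/-- bracket compatibility of a relation on 𝔖(Z). -/
def BracketCompat {Z : Type u} (le : OpWord Z → OpWord Z → Prop) : Prop :=
  ∀ u v, le u v → le (OpWord.opD u) (OpWord.opD v) ∧ le (OpWord.opP u) (OpWord.opP v)

/-- left compatibility of a relation on 𝔖(Z). -/
def LeftCompat {Z : Type u} (le : OpWord Z → OpWord Z → Prop) : Prop :=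
  ∀ u v, le u v → ∀ w, le (w * u) (w * v)

/-- right compatibility of a relation on 𝔖(Z). -/
def RightCompat {Z : Type u} (le : OpWord Z → OpWord Z → Prop) : Prop :=
  ∀ u v, le u v → ∀ w, le (u * w) (v * w)

/-! ## The free operated algebras k𝔖(Z) and k𝔐(Z) -/

/-- `k𝔖(Z)`: the free nonunital Ω-operated `k`-algebra on `Z`, with basis 𝔖(Z). -/
abbrev FreeOpAlgS (k : Type w) [Field k] (Z : Type u) := MonoidAlgebra k (OpWord Z)

/-- `k𝔐(Z)`: the free unital Ω-operated `k`-algebra on `Z`, with basis 𝔐(Z). -/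
abbrev FreeOpAlgM (k : Type w) [Field k] (Z : Type u) := MonoidAlgebra k (MWord Z)

variable {k : Type w} [Field k] {Z : Type u}

/-- the monomial `w` as an element of k𝔖(Z). -/
def monoS (w : OpWord Z) : FreeOpAlgS k Z := MonoidAlgebra.single w 1

/-- the monomial `w` as an element of k𝔐(Z). -/
def monoM (w : MWord Z) : FreeOpAlgM k Z := MonoidAlgebra.single w 1

/-- the linear extension of the operator `⌊·⌋_D` to k𝔖(Z). -/
def liftDS (f : FreeOpAlgS k Z) : FreeOpAlgS k Z := MonoidAlgebra.mapDomain OpWord.opD f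
def liftPS (f : FreeOpAlgS k Z) : FreeOpAlgS k Z := MonoidAlgebra.mapDomain OpWord.opP f
def liftDM (f : FreeOpAlgM k Z) : FreeOpAlgM k Z := MonoidAlgebra.mapDomain MWord.opD f
def liftPM (f : FreeOpAlgM k Z) : FreeOpAlgM k Z := MonoidAlgebra.mapDomain MWord.opP f

/-- `w` is the leading monomial of `f` with respect to `le`. -/
def IsLMS (le : OpWord Z → OpWord Z → Prop) (f : FreeOpAlgS k Z) (w : OpWord Z) : Prop :=
  w ∈ f.coeff.support ∧ ∀ u ∈ f.coeff.support, le u w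

def IsLMM (le : MWord Z → MWord Z → Prop) (f : FreeOpAlgM k Z) (w : MWord Z) : Prop :=
  w ∈ f.coeff.support ∧ ∀ u ∈ f.coeff.support, le u w

/-- `q|_f`: the linear extension of the context `q` applied to `f ∈ k𝔖(Z)`. -/
def ctxApplyS (q : OpWord (Option Z)) (f : FreeOpAlgS k Z) : FreeOpAlgS k Z :=
  MonoidAlgebra.mapDomain (fun w => substS q w) f

def ctxApplyM (q : MWord (Option Z)) (f : FreeOpAlgM k Z) : FreeOpAlgM k Z :=
  MonoidAlgebra.mapDomain (fun w => MWord.msubst q w) f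

/-! ## Ω-ideals -/

/-- the Ω-ideal of k𝔖(Z) generated by `S`: the smallest subspace containing `S`,
closed under left and right multiplication and under both operators. -/
def omegaIdealS (S : Set (FreeOpAlgS k Z)) : Submodule k (FreeOpAlgS k Z) :=
  sInf {N | S ⊆ ↑N ∧ (∀ a : FreeOpAlgS k Z, ∀ x ∈ N, a * x ∈ N) ∧
      (∀ a : FreeOpAlgS k Z, ∀ x ∈ N, x * a ∈ N) ∧
      (∀ x ∈ N, liftDS x ∈ N) ∧ (∀ x ∈ N, liftPS x ∈ N)}

def omegaIdealM (S : Set (FreeOpAlgM k Z)) : Submodule k (FreeOpAlgM k Z) :=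
  sInf {N | S ⊆ ↑N ∧ (∀ a : FreeOpAlgM k Z, ∀ x ∈ N, a * x ∈ N) ∧
      (∀ a : FreeOpAlgM k Z, ∀ x ∈ N, x * a ∈ N) ∧
      (∀ x ∈ N, liftDM x ∈ N) ∧ (∀ x ∈ N, liftPM x ∈ N)}

/-- the (operator-free, associative) ideal of the subalgebra kS(Z) ⊆ k𝔖(Z)
generated by `S`. -/
def plainIdealS (S : Set (FreeOpAlgS k Z)) : Submodule k (FreeOpAlgS k Z) :=
  sInf {N | S ⊆ ↑N ∧ (∀ w : OpWord Z, wordPlain w → ∀ x ∈ N,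
      (monoS (k := k) w) * x ∈ N ∧ x * (monoS (k := k) w) ∈ N)}

/-- the (operator-free, associative) ideal of the subalgebra kM(Z) ⊆ k𝔐(Z)
generated by `S`. -/
def plainIdealM (S : Set (FreeOpAlgM k Z)) : Submodule k (FreeOpAlgM k Z) :=
  sInf {N | S ⊆ ↑N ∧ (∀ w : MWord Z, MWord.isPlain w → ∀ x ∈ N,
      (monoM (k := k) w) * x ∈ N ∧ x * (monoM (k := k) w) ∈ N)}

/-! ## Compositions, triviality and Gröbner–Shirshov bases.

Both are parameterized by a predicate `C` on the allowed contexts (for the operated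
theory, `C q` says the star occurs exactly once; for the classical operator-free
theory on the free (semi)group one additionally requires contexts to be plain)
and a predicate `W` on the words `u, v` allowed in intersection compositions. -/

/-- `h` is trivial modulo `(G, p)`: it can be written as a linear combination
`Σ cᵢ qᵢ|_{sᵢ}` with `sᵢ ∈ G` and `qᵢ|_{lm(sᵢ)} < p`. -/
def TrivialModS (le : OpWord Z → OpWord Z → Prop) (G : Set (FreeOpAlgS k Z))
    (C : OpWord (Option Z) → Prop) (p : OpWord Z) (h : FreeOpAlgS k Z) : Prop :=
  ∃ (n : ℕ) (c : Fin n → k) (q : Fin n → OpWord (Option Z)) (s : Fin n → FreeOpAlgS k Z)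
    (m : Fin n → OpWord Z),
      (∀ i, C (q i)) ∧ (∀ i, s i ∈ G) ∧ (∀ i, IsLMS le (s i) (m i)) ∧
      (∀ i, ltOf le (substS (q i) (m i)) p) ∧
      h = ∑ i, c i • ctxApplyS (q i) (s i)

def TrivialModM (le : MWord Z → MWord Z → Prop) (G : Set (FreeOpAlgM k Z))
    (C : MWord (Option Z) → Prop) (p : MWord Z) (h : FreeOpAlgM k Z) : Prop :=
  ∃ (n : ℕ) (c : Fin n → k) (q : Fin n → MWord (Option Z)) (s : Fin n → FreeOpAlgM k Z)
    (m : Fin n → MWord Z),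
      (∀ i, C (q i)) ∧ (∀ i, s i ∈ G) ∧ (∀ i, IsLMM le (s i) (m i)) ∧
      (∀ i, ltOf le (MWord.msubst (q i) (m i)) p) ∧
      h = ∑ i, c i • ctxApplyM (q i) (s i)

/-- `G` is a Gröbner–Shirshov basis: all intersection compositions `fu - vg` and all
inclusion compositions `f - q|_g` of monicized pairs from `G` are trivial. -/
def IsGSBasisS (le : OpWord Z → OpWord Z → Prop) (G : Set (FreeOpAlgS k Z))
    (C : OpWord (Option Z) → Prop) (W : OpWord Z → Prop) : Prop :=
  ∀ f ∈ G, ∀ g ∈ G, ∀ wf wg, IsLMS le f wf → IsLMS le g wg →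
    (∀ u v p : OpWord Z, W u → W v → p = wf * u → p = v * wg →
      max (OpWord.breadth wf) (OpWord.breadth wg) < OpWord.breadth p →
      OpWord.breadth p < OpWord.breadth wf + OpWord.breadth wg →
      TrivialModS le G C p
        (((f.coeff wf)⁻¹ • f) * monoS u - monoS v * ((g.coeff wg)⁻¹ • g))) ∧
    (∀ (q : OpWord (Option Z)) (p : OpWord Z), C q → p = wf → p = substS q wg →
      TrivialModS le G C p ((f.coeff wf)⁻¹ • f - ctxApplyS q ((g.coeff wg)⁻¹ • g)))

def IsGSBasisM (le : MWord Z → MWord Z → Prop) (G : Set (FreeOpAlgM k Z))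
    (C : MWord (Option Z) → Prop) (W : MWord Z → Prop) : Prop :=
  ∀ f ∈ G, ∀ g ∈ G, ∀ wf wg, IsLMM le f wf → IsLMM le g wg →
    (∀ u v p : MWord Z, W u → W v → p = wf * u → p = v * wg →
      max (MWord.breadth wf) (MWord.breadth wg) < MWord.breadth p →
      MWord.breadth p < MWord.breadth wf + MWord.breadth wg →
      TrivialModM le G C p
        (((f.coeff wf)⁻¹ • f) * monoM u - monoM v * ((g.coeff wg)⁻¹ • g))) ∧
    (∀ (q : MWord (Option Z)) (p : MWord Z), C q → p = wf → p = MWord.msubst q wg →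
      TrivialModM le G C p ((f.coeff wf)⁻¹ • f - ctxApplyM q ((g.coeff wg)⁻¹ • g)))

/-- the context predicate of the operated theory: the star occurs exactly once. -/
def ctxAllS {Z : Type u} (q : OpWord (Option Z)) : Prop := wordSCount q = 1
def ctxAllM {Z : Type u} (q : MWord (Option Z)) : Prop := MWord.mscount q = 1

/-- the context predicate of the classical (operator-free) theory. -/
def ctxPlainS {Z : Type u} (q : OpWord (Option Z)) : Prop := wordSCount q = 1 ∧ wordPlain q
def ctxPlainM {Z : Type u} (q : MWord (Option Z)) : Prop := MWord.mscount q = 1 ∧ MWord.isPlain q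

/-! ## Irreducible monomials -/

/-- `Irr(G)`: monomials that are not of the form `q|_{lm(s)}` for `s ∈ G`. -/
def irrS (le : OpWord Z → OpWord Z → Prop) (G : Set (FreeOpAlgS k Z)) : Set (OpWord Z) :=
  {x | ¬ ∃ s ∈ G, ∃ q : OpWord (Option Z), wordSCount q = 1 ∧
        ∃ m, IsLMS le s m ∧ x = substS q m}

def irrM (le : MWord Z → MWord Z → Prop) (G : Set (FreeOpAlgM k Z)) : Set (MWord Z) :=
  {x | ¬ ∃ s ∈ G, ∃ q : MWord (Option Z), MWord.mscount q = 1 ∧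
        ∃ m, IsLMM le s m ∧ x = MWord.msubst q m}

/-! ## Operated polynomial identities -/

/-- substitution instance of an OPI `φ ∈ k𝔖(X)` under `σ : X → 𝔖(Z)`. -/
def opiSubstS {X : Type v} (σ : X → OpWord Z) (φ : FreeOpAlgS k X) : FreeOpAlgS k Z :=
  MonoidAlgebra.mapDomain (wordSEval σ) φ

/-- substitution instance of an OPI `φ ∈ k𝔐(X)` under `σ : X → 𝔐(Z)`. -/
def opiSubstM {X : Type v} (σ : X → MWord Z) (φ : FreeOpAlgM k X) : FreeOpAlgM k Z :=
  MonoidAlgebra.mapDomain (MWord.meval σ) φ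

/-- `S_Φ(𝔖(Z))`: all substitution instances of the OPIs of `Φ`. -/
def sPhiS {X : Type v} (Φ : Set (FreeOpAlgS k X)) (Z : Type u) : Set (FreeOpAlgS k Z) :=
  {f | ∃ φ ∈ Φ, ∃ σ : X → OpWord Z, f = opiSubstS σ φ}

def sPhiM {X : Type v} (Φ : Set (FreeOpAlgM k X)) (Z : Type u) : Set (FreeOpAlgM k Z) :=
  {f | ∃ φ ∈ Φ, ∃ σ : X → MWord Z, f = opiSubstM σ φ}

/-- an OPI is multilinear if each variable occurring in it occurs exactly once in
every monomial of it. -/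
def MultilinearS {X : Type v} [DecidableEq X] (φ : FreeOpAlgS k X) : Prop :=
  ∀ x : X, (∃ u ∈ φ.coeff.support, 1 ≤ wordLCount x u) →
    ∀ u ∈ φ.coeff.support, wordLCount x u = 1

def MultilinearM {X : Type v} [DecidableEq X] (φ : FreeOpAlgM k X) : Prop :=
  ∀ x : X, (∃ u ∈ φ.coeff.support, 1 ≤ MWord.mlcount x u) →
    ∀ u ∈ φ.coeff.support, MWord.mlcount x u = 1
/-! ## The OPIs for differential Rota–Baxter and integro-differential algebras.

We write them directly as families of elements of k𝔖(Z), parameterized by the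
words substituted for the variables. -/

open OpWord in
/-- `φ₁(u,v) = P(u)P(v) − P(uP(v)) − P(P(u)v) − λP(uv)`. -/
def phi1 (lam : k) (u v : OpWord Z) : FreeOpAlgS k Z :=
  monoS (opP u * opP v) - monoS (opP (u * opP v)) - monoS (opP (opP u * v))
    - lam • monoS (opP (u * v))

open OpWord in
/-- `φ₂(u,v) = D(u)D(v) + λ⁻¹D(u)v + λ⁻¹uD(v) − λ⁻¹D(uv)`. -/
def phi2 (lam : k) (u v : OpWord Z) : FreeOpAlgS k Z :=
  monoS (opD u * opD v) + lam⁻¹ • monoS (opD u * v) + lam⁻¹ • monoS (u * opD v)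
    - lam⁻¹ • monoS (opD (u * v))

open OpWord in
/-- `φ₃(u) = D(P(u)) − u`. -/
def phi3 (u : OpWord Z) : FreeOpAlgS k Z :=
  monoS (opD (opP u)) - monoS u

open OpWord in
/-- `φ₄(u,v) = P(u)D(v) − D(P(u)v) + uv + λuD(v)`. -/
def phi4 (lam : k) (u v : OpWord Z) : FreeOpAlgS k Z :=
  monoS (opP u * opD v) - monoS (opD (opP u * v)) + monoS (u * v)
    + lam • monoS (u * opD v)

open OpWord in
/-- `φ₅(u,v) = D(u)P(v) − D(uP(v)) + uv + λD(u)v`. -/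
def phi5 (lam : k) (u v : OpWord Z) : FreeOpAlgS k Z :=
  monoS (opD u * opP v) - monoS (opD (u * opP v)) + monoS (u * v)
    + lam • monoS (opD u * v)

open OpWord in
/-- `φ₆(u,v) = P(D(u)P(v)) − uP(v) + P(uv) + λP(D(u)v)`. -/
def phi6 (lam : k) (u v : OpWord Z) : FreeOpAlgS k Z :=
  monoS (opP (opD u * opP v)) - monoS (u * opP v) + monoS (opP (u * v))
    + lam • monoS (opP (opD u * v))

open OpWord in
/-- `φ₇(u,v) = P(P(u)D(v)) − P(u)v + P(uv) + λP(uD(v))`. -/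
def phi7 (lam : k) (u v : OpWord Z) : FreeOpAlgS k Z :=
  monoS (opP (opP u * opD v)) - monoS (opP u * v) + monoS (opP (u * v))
    + lam • monoS (opP (u * opD v))

open OpWord in
/-- `φ₈(u,v) = P(D(P(u)v)) − P(u)v`. -/
def phi8 (u v : OpWord Z) : FreeOpAlgS k Z :=
  monoS (opP (opD (opP u * v))) - monoS (opP u * v)

open OpWord in
/-- `φ₉(u,v) = P(D(uP(v))) − uP(v)`. -/
def phi9 (u v : OpWord Z) : FreeOpAlgS k Z :=
  monoS (opP (opD (u * opP v))) - monoS (u * opP v)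

open OpWord in
/-- `φ₁⁰(u,v) = P(u)P(v) − P(uP(v)) − P(P(u)v)` (weight 0). -/
def phi1z (u v : OpWord Z) : FreeOpAlgS k Z :=
  monoS (opP u * opP v) - monoS (opP (u * opP v)) - monoS (opP (opP u * v))

open OpWord in
/-- `φ₂⁰(u,v) = D(u)v + uD(v) − D(uv)` (weight 0). -/
def phi2z (u v : OpWord Z) : FreeOpAlgS k Z :=
  monoS (opD u * v) + monoS (u * opD v) - monoS (opD (u * v))

open OpWord in
/-- `φ₄⁰(u,v) = P(u)D(v) − D(P(u)v) + uv` (weight 0). -/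
def phi4z (u v : OpWord Z) : FreeOpAlgS k Z :=
  monoS (opP u * opD v) - monoS (opD (opP u * v)) + monoS (u * v)

/-- `S_{Φ_dRB}(𝔖(Z))` for `Φ_dRB = {φ₁,…,φ₅}` (λ ≠ 0). -/
def SdRB (lam : k) (Z : Type u) : Set (FreeOpAlgS k Z) :=
  {f | (∃ u v, f = phi1 lam u v) ∨ (∃ u v, f = phi2 lam u v) ∨ (∃ u, f = phi3 u) ∨
       (∃ u v, f = phi4 lam u v) ∨ (∃ u v, f = phi5 lam u v)}

/-- `S_{Φ_0dRB}(𝔖(Z))` for `Φ_0dRB = {φ₁⁰, φ₂⁰, φ₃⁰, φ₄⁰}` (λ = 0). -/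
def SdRBz (k : Type w) [Field k] (Z : Type u) : Set (FreeOpAlgS k Z) :=
  {f | (∃ u v, f = phi1z u v) ∨ (∃ u v, f = phi2z u v) ∨ (∃ u, f = phi3 (k := k) u) ∨
       (∃ u v, f = phi4z u v)}

/-- `S_{Φ'_ID}(𝔖(Z))` for `Φ'_ID = {φ₂, φ₃, φ₆, φ₇}` (λ ≠ 0). -/
def SIDp (lam : k) (Z : Type u) : Set (FreeOpAlgS k Z) :=
  {f | (∃ u v, f = phi2 lam u v) ∨ (∃ u, f = phi3 u) ∨
       (∃ u v, f = phi6 lam u v) ∨ (∃ u v, f = phi7 lam u v)}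

/-- `S_{Φ_ID}(𝔖(Z))` for `Φ_ID = {φ₁, φ₂, φ₃, φ₄, φ₅, φ₈, φ₉}` (λ ≠ 0). -/
def SID (lam : k) (Z : Type u) : Set (FreeOpAlgS k Z) :=
  {f | (∃ u v, f = phi1 lam u v) ∨ (∃ u v, f = phi2 lam u v) ∨ (∃ u, f = phi3 u) ∨
       (∃ u v, f = phi4 lam u v) ∨ (∃ u v, f = phi5 lam u v) ∨
       (∃ u v, f = phi8 u v) ∨ (∃ u v, f = phi9 u v)}

/-! ## Miscellaneous helpers -/

/-- the lexicographic combination `≤_{α₁,…,α_k}` of a list of preorders: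
`u ≤ v` iff `u <_{α₁} v`, or `u =_{α₁} v` and `u ≤_{α₂,…,α_k} v`. -/
def lexComb {X : Type u} : List (X → X → Prop) → X → X → Prop
  | [] => fun _ _ => True
  | [r] => r
  | r :: s :: rest => fun a b => (r a b ∧ ¬ r b a) ∨ (r a b ∧ r b a ∧ lexComb (s :: rest) a b)

/-- the subspace `kS(Z) ⊆ k𝔖(Z)` spanned by the plain monomials. -/
def plainSpanS (k : Type w) [Field k] (Z : Type u) : Submodule k (FreeOpAlgS k Z) :=
  Submodule.span k ((fun x : OpWord Z => monoS (k := k) x) '' {x | wordPlain x})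

end


/-! ## Auxiliary material for the proof -/

section PDAux

variable {Z : Type u}

theorem single_mul (a : OpAtom Z) (v : OpWord Z) :
    (OpWord.single a) * v = OpWord.cons a v := rfl

theorem cons_mul (a : OpAtom Z) (u v : OpWord Z) :
    (OpWord.cons a u) * v = OpWord.cons a (u * v) := rfl

theorem degD_mul : ∀ u v : OpWord Z, wordDegD (u * v) = wordDegD u + wordDegD v
  | .single a, v => rfl
  | .cons a u, v => by
      rw [cons_mul]; simp only [wordDegD, degD_mul u v]; omega

theorem degP_mul : ∀ u v : OpWord Z, wordDegP (u * v) = wordDegP u + wordDegP v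
  | .single a, v => rfl
  | .cons a u, v => by
      rw [cons_mul]; simp only [wordDegP, degP_mul u v]; omega

theorem degZ_mul : ∀ u v : OpWord Z, wordDegZ (u * v) = wordDegZ u + wordDegZ v
  | .single a, v => rfl
  | .cons a u, v => by
      rw [cons_mul]; simp only [wordDegZ, degZ_mul u v]; omega

theorem degGD_mul : ∀ u v : OpWord Z,
    wordDegGD (u * v) = wordDegGD u + wordDegGD v + wordDegD u * wordDegZ v
  | .single a, v => rfl
  | .cons a u, v => by
      rw [cons_mul]
      simp only [wordDegGD, wordDegD, wordDegZ, degGD_mul u v, degZ_mul]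
      ring

theorem degGP_mul : ∀ u v : OpWord Z,
    wordDegGP (u * v) = wordDegGP u + wordDegGP v
      + wordDegP u * wordDegZ v + wordDegP v * wordDegZ u
  | .single a, v => rfl
  | .cons a u, v => by
      rw [cons_mul]
      simp only [wordDegGP, wordDegP, wordDegZ, degGP_mul u v, degZ_mul, degP_mul]
      ring

theorem breadth_mul : ∀ u v : OpWord Z,
    OpWord.breadth (u * v) = OpWord.breadth u + OpWord.breadth v
  | .single a, v => rfl
  | .cons a u, v => by
      rw [cons_mul]; simp only [OpWord.breadth, breadth_mul u v]; omega

theorem breadth_pos (u : OpWord Z) : 1 ≤ OpWord.breadth u := by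
  cases u <;> simp [OpWord.breadth]


/-! ### Generic lexicographic combination -/

def lexP {X : Type*} (f : X → ℕ) (r : X → X → Prop) : X → X → Prop :=
  fun a b => f a < f b ∨ (f a = f b ∧ r a b)

theorem lexP_trans {X : Type*} {f : X → ℕ} {r : X → X → Prop}
    (hr : ∀ a b c, r a b → r b c → r a c) {a b c : X}
    (h1 : lexP f r a b) (h2 : lexP f r b c) : lexP f r a c := by
  rcases h1 with h1 | ⟨e1, h1⟩
  · rcases h2 with h2 | ⟨e2, h2⟩
    · exact Or.inl (h1.trans h2)
    · exact Or.inl (e2 ▸ h1)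
  · rcases h2 with h2 | ⟨e2, h2⟩
    · exact Or.inl (e1 ▸ h2)
    · exact Or.inr ⟨e1.trans e2, hr _ _ _ h1 h2⟩

theorem lexP_irrefl {X : Type*} {f : X → ℕ} {r : X → X → Prop}
    (hr : ∀ a, ¬ r a a) (a : X) : ¬ lexP f r a a := by
  rintro (h | ⟨-, h⟩)
  · omega
  · exact hr a h

theorem lexP_tri {X : Type*} {f : X → ℕ} {r : X → X → Prop}
    (hr : ∀ a b, f a = f b → (r a b ∨ a = b ∨ r b a)) (a b : X) :
    lexP f r a b ∨ a = b ∨ lexP f r b a := by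
  rcases Nat.lt_trichotomy (f a) (f b) with h | h | h
  · exact Or.inl (Or.inl h)
  · rcases hr a b h with h' | h' | h'
    · exact Or.inl (Or.inr ⟨h, h'⟩)
    · exact Or.inr (Or.inl h')
    · exact Or.inr (Or.inr (Or.inr ⟨h.symm, h'⟩))
  · exact Or.inr (Or.inr (Or.inl h))

/-! ### Transitivity, irreflexivity, trichotomy of the Dlex orders -/

variable [LinearOrder Z]

mutual
theorem atomLt_trans : ∀ a b c : OpAtom Z, atomDlexLt a b → atomDlexLt b c → atomDlexLt a c
  | .letter _, .letter _, .letter _, h1, h2 => lt_trans h1 h2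
  | .letter _, _, .brD _, _, _ => trivial
  | .letter _, _, .brP _, _, _ => trivial
  | .letter _, .brD _, .letter _, _, h2 => h2.elim
  | .letter _, .brP _, .letter _, _, h2 => h2.elim
  | .brD _, .letter _, _, h1, _ => h1.elim
  | .brD u, .brD v, .brD w, h1, h2 => by
      rcases h1 with h1 | ⟨e1, h1⟩
      · rcases h2 with h2 | ⟨e2, h2⟩
        · exact Or.inl (h1.trans h2)
        · exact Or.inl (e2 ▸ h1)
      · rcases h2 with h2 | ⟨e2, h2⟩
        · exact Or.inl (e1 ▸ h2)
        · exact Or.inr ⟨e1.trans e2, wordLex_trans u v w h1 h2⟩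
  | .brD _, .brD _, .letter _, _, h2 => h2.elim
  | .brD _, _, .brP _, _, _ => trivial
  | .brD _, .brP _, .letter _, _, h2 => h2.elim
  | .brD _, .brP _, .brD _, _, h2 => h2.elim
  | .brP _, .letter _, _, h1, _ => h1.elim
  | .brP _, .brD _, _, h1, _ => h1.elim
  | .brP _, .brP _, .letter _, _, h2 => h2.elim
  | .brP _, .brP _, .brD _, _, h2 => h2.elim
  | .brP u, .brP v, .brP w, h1, h2 => by
      rcases h1 with h1 | ⟨e1, h1⟩
      · rcases h2 with h2 | ⟨e2, h2⟩
        · exact Or.inl (h1.trans h2)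
        · exact Or.inl (e2 ▸ h1)
      · rcases h2 with h2 | ⟨e2, h2⟩
        · exact Or.inl (e1 ▸ h2)
        · exact Or.inr ⟨e1.trans e2, wordLex_trans u v w h1 h2⟩
termination_by a _ _ _ _ => sizeOf a

theorem wordLex_trans : ∀ u v w : OpWord Z, wordLexLt u v → wordLexLt v w → wordLexLt u w
  | .single a, .single b, .single c, h1, h2 => atomLt_trans a b c h1 h2
  | .single a, .single b, .cons c _, h1, h2 => atomLt_trans a b c h1 h2
  | .single a, .cons b _, .single c, h1, h2 => atomLt_trans a b c h1 h2
  | .single a, .cons b _, .cons c _, h1, h2 => by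
      rcases h2 with h2 | ⟨rfl, _⟩
      · exact atomLt_trans a b c h1 h2
      · exact h1
  | .cons a _, .single b, .single c, h1, h2 => atomLt_trans a b c h1 h2
  | .cons a _, .single b, .cons c _, h1, h2 => Or.inl (atomLt_trans a b c h1 h2)
  | .cons a u, .cons b v, .single c, h1, h2 => by
      rcases h1 with h1 | ⟨rfl, _⟩
      · exact atomLt_trans a b c h1 h2
      · exact h2
  | .cons a u, .cons b v, .cons c w, h1, h2 => by
      rcases h1 with h1 | ⟨rfl, h1⟩
      · rcases h2 with h2 | ⟨rfl, _⟩
        · exact Or.inl (atomLt_trans a b c h1 h2)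
        · exact Or.inl h1
      · rcases h2 with h2 | ⟨rfl, h2⟩
        · exact Or.inl h2
        · exact Or.inr ⟨rfl, wordLex_trans u v w h1 h2⟩
termination_by u _ _ _ _ => sizeOf u
end

mutual
theorem atomLt_irrefl : ∀ a : OpAtom Z, ¬ atomDlexLt a a
  | .letter z => lt_irrefl z
  | .brD u => by
      rintro (h | ⟨-, h⟩)
      · omega
      · exact wordLex_irrefl u h
  | .brP u => by
      rintro (h | ⟨-, h⟩)
      · omega
      · exact wordLex_irrefl u h
termination_by a => sizeOf a

theorem wordLex_irrefl : ∀ u : OpWord Z, ¬ wordLexLt u u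
  | .single a => atomLt_irrefl a
  | .cons a u => by
      rintro (h | ⟨-, h⟩)
      · exact atomLt_irrefl a h
      · exact wordLex_irrefl u h
termination_by u => sizeOf u
end

mutual
theorem atomLt_tri : ∀ a b : OpAtom Z, atomDlexLt a b ∨ a = b ∨ atomDlexLt b a
  | .letter x, .letter y => by
      rcases lt_trichotomy x y with h | h | h
      · exact Or.inl h
      · exact Or.inr (Or.inl (by rw [h]))
      · exact Or.inr (Or.inr h)
  | .letter _, .brD _ => Or.inl trivial
  | .letter _, .brP _ => Or.inl trivial
  | .brD _, .letter _ => Or.inr (Or.inr trivial)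
  | .brD u, .brD v => by
      rcases Nat.lt_trichotomy (OpWord.breadth u) (OpWord.breadth v) with hb | hb | hb
      · exact Or.inl (Or.inl hb)
      · rcases wordLex_tri u v hb with h | h | h
        · exact Or.inl (Or.inr ⟨hb, h⟩)
        · exact Or.inr (Or.inl (by rw [h]))
        · exact Or.inr (Or.inr (Or.inr ⟨hb.symm, h⟩))
      · exact Or.inr (Or.inr (Or.inl hb))
  | .brD _, .brP _ => Or.inl trivial
  | .brP _, .letter _ => Or.inr (Or.inr trivial)
  | .brP _, .brD _ => Or.inr (Or.inr trivial)
  | .brP u, .brP v => by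
      rcases Nat.lt_trichotomy (OpWord.breadth u) (OpWord.breadth v) with hb | hb | hb
      · exact Or.inl (Or.inl hb)
      · rcases wordLex_tri u v hb with h | h | h
        · exact Or.inl (Or.inr ⟨hb, h⟩)
        · exact Or.inr (Or.inl (by rw [h]))
        · exact Or.inr (Or.inr (Or.inr ⟨hb.symm, h⟩))
      · exact Or.inr (Or.inr (Or.inl hb))
termination_by a _ => sizeOf a

theorem wordLex_tri : ∀ u v : OpWord Z, OpWord.breadth u = OpWord.breadth v →
    wordLexLt u v ∨ u = v ∨ wordLexLt v u
  | .single a, .single b, _ => by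
      rcases atomLt_tri a b with h | h | h
      · exact Or.inl h
      · exact Or.inr (Or.inl (by rw [h]))
      · exact Or.inr (Or.inr h)
  | .single a, .cons b v, hb => by
      exact absurd hb (by simp only [OpWord.breadth]; have := breadth_pos v; omega)
  | .cons a u, .single b, hb => by
      exact absurd hb (by simp only [OpWord.breadth]; have := breadth_pos u; omega)
  | .cons a u, .cons b v, hb => by
      rcases atomLt_tri a b with h | h | h
      · exact Or.inl (Or.inl h)
      · subst h
        rcases wordLex_tri u v (by simpa [OpWord.breadth] using hb) with h | h | h
        · exact Or.inl (Or.inr ⟨rfl, h⟩)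
        · exact Or.inr (Or.inl (by rw [h]))
        · exact Or.inr (Or.inr (Or.inr ⟨rfl, h⟩))
      · exact Or.inr (Or.inr (Or.inl h))
termination_by u _ _ => sizeOf u
end

/-! ### Properties of dlexLt and pdLt -/

theorem dlexLt_def : (dlexLt : OpWord Z → OpWord Z → Prop)
    = lexP OpWord.breadth wordLexLt := rfl

theorem pdLt_def : (pdLt : OpWord Z → OpWord Z → Prop)
    = lexP wordDegD (lexP wordDegP (lexP wordDegZ (lexP wordDegGD
        (lexP wordDegGP dlexLt)))) := rfl

theorem dlex_trans {u v w : OpWord Z} (h1 : dlexLt u v) (h2 : dlexLt v w) : dlexLt u w := by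
  rw [dlexLt_def] at h1 h2 ⊢
  exact lexP_trans (fun a b c => wordLex_trans a b c) h1 h2

theorem dlex_irrefl (u : OpWord Z) : ¬ dlexLt u u := by
  rw [dlexLt_def]
  exact lexP_irrefl (fun a => wordLex_irrefl a) u

theorem dlex_tri (u v : OpWord Z) : dlexLt u v ∨ u = v ∨ dlexLt v u := by
  rw [dlexLt_def]
  exact lexP_tri (fun a b h => wordLex_tri a b h) u v

theorem pdLt_trans {u v w : OpWord Z} (h1 : pdLt u v) (h2 : pdLt v w) : pdLt u w := by
  rw [pdLt_def] at h1 h2 ⊢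
  refine lexP_trans (fun a b c h h' => ?_) h1 h2
  refine lexP_trans (fun a b c h h' => ?_) h h'
  refine lexP_trans (fun a b c h h' => ?_) h h'
  refine lexP_trans (fun a b c h h' => ?_) h h'
  exact lexP_trans (fun a b c h h' => dlex_trans (u := a) (v := b) (w := c) h h') h h'

theorem pdLt_irrefl (u : OpWord Z) : ¬ pdLt u u := by
  rw [pdLt_def]
  refine lexP_irrefl (fun a => ?_) u
  refine lexP_irrefl (fun a => ?_) a
  refine lexP_irrefl (fun a => ?_) a
  refine lexP_irrefl (fun a => ?_) a
  exact lexP_irrefl (fun a => dlex_irrefl a) a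

theorem pdLt_tri (u v : OpWord Z) : pdLt u v ∨ u = v ∨ pdLt v u := by
  rw [pdLt_def]
  refine lexP_tri (fun a b _ => ?_) u v
  refine lexP_tri (fun a b _ => ?_) a b
  refine lexP_tri (fun a b _ => ?_) a b
  refine lexP_tri (fun a b _ => ?_) a b
  exact lexP_tri (fun a b _ => dlex_tri a b) a b

theorem pdLt_asymm {u v : OpWord Z} (h1 : pdLt u v) (h2 : pdLt v u) : False :=
  pdLt_irrefl u (pdLt_trans h1 h2)

/-! ### Compatibility with multiplication and the operators -/

theorem wordLex_mul_left : ∀ (w u v : OpWord Z), wordLexLt u v →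
    wordLexLt (w * u) (w * v)
  | .single a, u, v, h => Or.inr ⟨rfl, h⟩
  | .cons a w, u, v, h => Or.inr ⟨rfl, wordLex_mul_left w u v h⟩

theorem wordLex_mul_right : ∀ u v : OpWord Z, OpWord.breadth u = OpWord.breadth v →
    ∀ w, wordLexLt u v → wordLexLt (u * w) (v * w)
  | .single a, .single b, _, w, h => Or.inl h
  | .single a, .cons b v, hb, w, h => by
      exact absurd hb (by simp only [OpWord.breadth]; have := breadth_pos v; omega)
  | .cons a u, .single b, hb, w, h => by
      exact absurd hb (by simp only [OpWord.breadth]; have := breadth_pos u; omega)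
  | .cons a u, .cons b v, hb, w, h => by
      rcases h with h | ⟨rfl, h⟩
      · exact Or.inl h
      · exact Or.inr ⟨rfl, wordLex_mul_right u v (by simpa [OpWord.breadth] using hb) w h⟩

theorem dlex_mul_left {u v : OpWord Z} (h : dlexLt u v) (w : OpWord Z) :
    dlexLt (w * u) (w * v) := by
  rcases h with h | ⟨hb, h⟩
  · exact Or.inl (by rw [breadth_mul, breadth_mul]; omega)
  · exact Or.inr ⟨by rw [breadth_mul, breadth_mul, hb], wordLex_mul_left w u v h⟩

theorem dlex_mul_right {u v : OpWord Z} (h : dlexLt u v) (w : OpWord Z) :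
    dlexLt (u * w) (v * w) := by
  rcases h with h | ⟨hb, h⟩
  · exact Or.inl (by rw [breadth_mul, breadth_mul]; omega)
  · exact Or.inr ⟨by rw [breadth_mul, breadth_mul, hb], wordLex_mul_right u v hb w h⟩

theorem pdLt_mul_left {u v : OpWord Z} (h : pdLt u v) (w : OpWord Z) :
    pdLt (w * u) (w * v) := by
  unfold pdLt at *
  simp only [degD_mul, degP_mul, degZ_mul, degGD_mul, degGP_mul]
  rcases h with h | ⟨e1, h⟩
  · exact Or.inl (by omega)
  refine Or.inr ⟨by omega, ?_⟩
  rcases h with h | ⟨e2, h⟩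
  · exact Or.inl (by omega)
  refine Or.inr ⟨by omega, ?_⟩
  rcases h with h | ⟨e3, h⟩
  · exact Or.inl (by omega)
  refine Or.inr ⟨by omega, ?_⟩
  rcases h with h | ⟨e4, h⟩
  · exact Or.inl (by rw [e3]; omega)
  refine Or.inr ⟨by rw [e3]; omega, ?_⟩
  rcases h with h | ⟨e5, h⟩
  · exact Or.inl (by rw [e2, e3]; omega)
  refine Or.inr ⟨by rw [e2, e3]; omega, ?_⟩
  exact dlex_mul_left h w

theorem pdLt_mul_right {u v : OpWord Z} (h : pdLt u v) (w : OpWord Z) :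
    pdLt (u * w) (v * w) := by
  unfold pdLt at *
  simp only [degD_mul, degP_mul, degZ_mul, degGD_mul, degGP_mul]
  rcases h with h | ⟨e1, h⟩
  · exact Or.inl (by omega)
  refine Or.inr ⟨by omega, ?_⟩
  rcases h with h | ⟨e2, h⟩
  · exact Or.inl (by omega)
  refine Or.inr ⟨by omega, ?_⟩
  rcases h with h | ⟨e3, h⟩
  · exact Or.inl (by omega)
  refine Or.inr ⟨by omega, ?_⟩
  rcases h with h | ⟨e4, h⟩
  · exact Or.inl (by rw [e1]; omega)
  refine Or.inr ⟨by rw [e1]; omega, ?_⟩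
  rcases h with h | ⟨e5, h⟩
  · exact Or.inl (by rw [e2, e3]; omega)
  refine Or.inr ⟨by rw [e2, e3]; omega, ?_⟩
  exact dlex_mul_right h w

theorem pdLt_opD {u v : OpWord Z} (h : pdLt u v) : pdLt (OpWord.opD u) (OpWord.opD v) := by
  unfold pdLt at *
  have hD : ∀ x : OpWord Z, wordDegD (OpWord.opD x) = wordDegD x + 1 := fun _ => rfl
  have hP : ∀ x : OpWord Z, wordDegP (OpWord.opD x) = wordDegP x := fun _ => rfl
  have hZ : ∀ x : OpWord Z, wordDegZ (OpWord.opD x) = wordDegZ x := fun _ => rfl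
  have hGD : ∀ x : OpWord Z, wordDegGD (OpWord.opD x) = wordDegGD x := fun _ => rfl
  have hGP : ∀ x : OpWord Z, wordDegGP (OpWord.opD x) = wordDegGP x := fun _ => rfl
  simp only [hD, hP, hZ, hGD, hGP]
  rcases h with h | ⟨e1, h⟩
  · exact Or.inl (by omega)
  refine Or.inr ⟨by omega, ?_⟩
  rcases h with h | ⟨e2, h⟩
  · exact Or.inl h
  refine Or.inr ⟨e2, ?_⟩
  rcases h with h | ⟨e3, h⟩
  · exact Or.inl h
  refine Or.inr ⟨e3, ?_⟩
  rcases h with h | ⟨e4, h⟩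
  · exact Or.inl h
  refine Or.inr ⟨e4, ?_⟩
  rcases h with h | ⟨e5, h⟩
  · exact Or.inl h
  refine Or.inr ⟨e5, ?_⟩
  exact Or.inr ⟨rfl, h⟩

theorem pdLt_opP {u v : OpWord Z} (h : pdLt u v) : pdLt (OpWord.opP u) (OpWord.opP v) := by
  unfold pdLt at *
  have hD : ∀ x : OpWord Z, wordDegD (OpWord.opP x) = wordDegD x := fun _ => rfl
  have hP : ∀ x : OpWord Z, wordDegP (OpWord.opP x) = wordDegP x + 1 := fun _ => rfl
  have hZ : ∀ x : OpWord Z, wordDegZ (OpWord.opP x) = wordDegZ x := fun _ => rfl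
  have hGD : ∀ x : OpWord Z, wordDegGD (OpWord.opP x) = wordDegGD x := fun _ => rfl
  have hGP : ∀ x : OpWord Z, wordDegGP (OpWord.opP x) = wordDegGP x := fun _ => rfl
  simp only [hD, hP, hZ, hGD, hGP]
  rcases h with h | ⟨e1, h⟩
  · exact Or.inl h
  refine Or.inr ⟨e1, ?_⟩
  rcases h with h | ⟨e2, h⟩
  · exact Or.inl (by omega)
  refine Or.inr ⟨by omega, ?_⟩
  rcases h with h | ⟨e3, h⟩
  · exact Or.inl h
  refine Or.inr ⟨e3, ?_⟩
  rcases h with h | ⟨e4, h⟩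
  · exact Or.inl h
  refine Or.inr ⟨e4, ?_⟩
  rcases h with h | ⟨e5, h⟩
  · exact Or.inl h
  refine Or.inr ⟨e5, ?_⟩
  exact Or.inr ⟨rfl, h⟩

/-! ### Sizes and accessibility -/

mutual
def sizeAtom {Z : Type u} : OpAtom Z → ℕ
  | .letter _ => 1
  | .brD w => sizeWord w + 1
  | .brP w => sizeWord w + 1
def sizeWord {Z : Type u} : OpWord Z → ℕ
  | .single a => sizeAtom a
  | .cons a w => sizeAtom a + sizeWord w
end

theorem sizeAtom_pos (a : OpAtom Z) : 1 ≤ sizeAtom a := by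
  cases a <;> simp [sizeAtom]

theorem sizeWord_pos (u : OpWord Z) : 1 ≤ sizeWord u := by
  cases u with
  | single a => exact sizeAtom_pos a
  | cons a w => have := sizeAtom_pos a; simp [sizeWord]; omega

mutual
theorem sizeAtom_eq : ∀ a : OpAtom Z,
    sizeAtom a = atomDegD a + atomDegP a + atomDegZ a
  | .letter _ => rfl
  | .brD w => by simp only [sizeAtom, atomDegD, atomDegP, atomDegZ, sizeWord_eq w]; omega
  | .brP w => by simp only [sizeAtom, atomDegD, atomDegP, atomDegZ, sizeWord_eq w]; omega
termination_by a => sizeOf a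

theorem sizeWord_eq : ∀ u : OpWord Z,
    sizeWord u = wordDegD u + wordDegP u + wordDegZ u
  | .single a => sizeAtom_eq a
  | .cons a w => by
      simp only [sizeWord, wordDegD, wordDegP, wordDegZ, sizeAtom_eq a, sizeWord_eq w]; omega
termination_by u => sizeOf u
end

/-- `dlexLt` restricted by a size bound on the smaller element. -/
def RwS (t : ℕ) (u v : OpWord Z) : Prop := dlexLt u v ∧ sizeWord u ≤ t

/-- `atomDlexLt` restricted by a size bound on the smaller element. -/
def RaS (t : ℕ) (a b : OpAtom Z) : Prop := atomDlexLt a b ∧ sizeAtom a ≤ t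

variable [WellFoundedLT Z]

theorem accLetter (t : ℕ) : ∀ z : Z, Acc (RaS t) (OpAtom.letter z) := by
  intro z
  induction (IsWellFounded.wf (r := ((· < ·) : Z → Z → Prop))).apply z with
  | intro z _ ih =>
    refine Acc.intro _ ?_
    rintro b ⟨hlt, -⟩
    cases b with
    | letter y => exact ih y hlt
    | brD w => exact hlt.elim
    | brP w => exact hlt.elim

theorem accBrD (t : ℕ) : ∀ w : OpWord Z, Acc (RwS t) w → Acc (RaS (t + 1)) (OpAtom.brD w) := by
  intro w hw
  induction hw with
  | intro x _ ih =>
    refine Acc.intro _ ?_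
    rintro b ⟨hlt, hsz⟩
    cases b with
    | letter y => exact accLetter _ y
    | brD w' =>
        exact ih w' ⟨hlt, by simpa [sizeAtom] using hsz⟩
    | brP w' => exact hlt.elim

theorem accBrP (t : ℕ) (hall : ∀ w' : OpWord Z, sizeWord w' ≤ t → Acc (RwS t) w') :
    ∀ w : OpWord Z, Acc (RwS t) w → Acc (RaS (t + 1)) (OpAtom.brP w) := by
  intro w hw
  induction hw with
  | intro x _ ih =>
    refine Acc.intro _ ?_
    rintro b ⟨hlt, hsz⟩
    cases b with
    | letter y => exact accLetter _ y
    | brD w' =>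
        exact accBrD t w' (hall w' (by simpa [sizeAtom] using hsz))
    | brP w' =>
        exact ih w' ⟨hlt, by simpa [sizeAtom] using hsz⟩

theorem atomsAcc (t : ℕ) (hall : ∀ w : OpWord Z, sizeWord w ≤ t → Acc (RwS t) w) :
    ∀ a : OpAtom Z, sizeAtom a ≤ t + 1 → Acc (RaS (t + 1)) a := by
  intro a ha
  cases a with
  | letter z => exact accLetter _ z
  | brD w => exact accBrD t w (hall w (by simpa [sizeAtom] using ha))
  | brP w => exact accBrP t hall w (hall w (by simpa [sizeAtom] using ha))

theorem singleAcc (t : ℕ) : ∀ a : OpAtom Z, Acc (RaS t) a → Acc (RwS t) (OpWord.single a) := by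
  intro a ha
  induction ha with
  | intro a _ ih =>
    refine Acc.intro _ ?_
    rintro v ⟨hlt, hsz⟩
    cases v with
    | single b =>
        rcases hlt with h | ⟨-, h⟩
        · exact absurd h (by simp [OpWord.breadth])
        · exact ih b ⟨h, hsz⟩
    | cons b v' =>
        exfalso
        rcases hlt with h | ⟨h, -⟩ <;>
          · have := breadth_pos v'
            simp only [OpWord.breadth] at h
            omega

theorem consAcc (t b : ℕ)
    (hsmall : ∀ v : OpWord Z, sizeWord v ≤ t → OpWord.breadth v ≤ b → Acc (RwS t) v) :
    ∀ a : OpAtom Z, Acc (RaS t) a →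
      ∀ u : OpWord Z, Acc (RwS t) u → OpWord.breadth u = b →
        Acc (RwS t) (OpWord.cons a u) := by
  intro a ha
  induction ha with
  | intro a _ iha =>
    intro u hu
    induction hu with
    | intro u _ ihu =>
      intro hb
      refine Acc.intro _ ?_
      rintro v ⟨hlt, hsz⟩
      rcases hlt with h | ⟨he, h⟩
      · refine hsmall v hsz ?_
        have := breadth_pos u
        simp only [OpWord.breadth] at h
        omega
      · cases v with
        | single c =>
            exfalso
            have := breadth_pos u
            simp only [OpWord.breadth] at he
            omega
        | cons c v' =>
            have he' : OpWord.breadth v' = b := by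
              simp only [OpWord.breadth] at he; omega
            have hsz' : sizeWord v' ≤ t := by
              have := sizeAtom_pos c
              simp only [sizeWord] at hsz
              omega
            rcases h with h | ⟨rfl, h⟩
            · have hc : sizeAtom c ≤ t := by
                have := sizeWord_pos v'
                simp only [sizeWord] at hsz
                omega
              exact iha c ⟨h, hc⟩ v' (hsmall v' hsz' (le_of_eq he')) he'
            · exact ihu v' ⟨Or.inr ⟨by omega, h⟩, hsz'⟩ he'

theorem wordsAcc (t : ℕ) (hatom : ∀ a : OpAtom Z, sizeAtom a ≤ t → Acc (RaS t) a) :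
    ∀ b : ℕ, ∀ w : OpWord Z, sizeWord w ≤ t → OpWord.breadth w ≤ b → Acc (RwS t) w := by
  intro b
  induction b with
  | zero => intro w _ hb; exact absurd hb (by have := breadth_pos w; omega)
  | succ b ih =>
    intro w hsw hb
    cases w with
    | single a => exact singleAcc t a (hatom a hsw)
    | cons a u =>
        have hsa : sizeAtom a ≤ t := by
          have := sizeWord_pos u; simp only [sizeWord] at hsw; omega
        have hsu : sizeWord u ≤ t := by
          have := sizeAtom_pos a; simp only [sizeWord] at hsw; omega
        have hbu : OpWord.breadth u ≤ b := by
          simp only [OpWord.breadth] at hb; omega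
        exact consAcc t (OpWord.breadth u)
          (fun v hv hbv => ih v hv (hbv.trans hbu))
          a (hatom a hsa) u (ih u hsu hbu) rfl

theorem mainAcc : ∀ t : ℕ, ∀ w : OpWord Z, sizeWord w ≤ t → Acc (RwS t) w := by
  intro t
  induction t with
  | zero => intro w h; exact absurd h (by have := sizeWord_pos w; omega)
  | succ t ih =>
    intro w hw
    exact wordsAcc (t + 1) (atomsAcc t ih) (OpWord.breadth w) w hw le_rfl

/-! ### Stabilization of descending chains -/

theorem natPeelAux : ∀ (k : ℕ) (g : ℕ → ℕ), g 0 ≤ k → (∀ n, g (n + 1) ≤ g n) →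
    ∃ M, ∀ n, g (M + n) = g M := by
  intro k
  induction k with
  | zero =>
    intro g hk hg
    have hle : ∀ n, g n ≤ g 0 := by
      intro n; induction n with
      | zero => exact le_rfl
      | succ n ih => exact (hg n).trans ih
    exact ⟨0, fun n => by have := hle (0 + n); omega⟩
  | succ k ih =>
    intro g hk hg
    by_cases hc : ∀ n, g n = g 0
    · exact ⟨0, fun n => (hc (0 + n)).trans (hc 0).symm⟩
    · push_neg at hc
      obtain ⟨m, hm⟩ := hc
      have hle : ∀ n, g n ≤ g 0 := by
        intro n; induction n with
        | zero => exact le_rfl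
        | succ n ih' => exact (hg n).trans ih'
      have hlt : g m < g 0 := lt_of_le_of_ne (hle m) hm
      obtain ⟨M', h'⟩ := ih (fun n => g (m + n)) (show g m ≤ k by omega)
        (fun n => hg (m + n))
      refine ⟨m + M', fun n => ?_⟩
      have := h' n
      simp only [Nat.add_assoc] at *
      exact this

theorem natPeelShift (g : ℕ → ℕ) (hg : ∀ n, g (n + 1) ≤ g n) :
    ∃ M, ∀ n, g (M + n) = g M :=
  natPeelAux (g 0) g le_rfl hg

theorem chainConst {X : Type*} {R : X → X → Prop} :
    ∀ x : X, Acc R x → ∀ g : ℕ → X, g 0 = x →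
      (∀ n, g (n + 1) = g n ∨ R (g (n + 1)) (g n)) →
        ∃ M, ∀ n, g (M + n) = g M := by
  intro x hacc
  induction hacc with
  | intro x _ ih =>
    intro g hg0 hstep
    by_cases hc : ∀ n, g n = g 0
    · exact ⟨0, fun n => (hc (0 + n)).trans (hc 0).symm⟩
    · push_neg at hc
      classical
      have hne : ∃ n, g n ≠ g 0 := hc
      have hm : g (Nat.find hne) ≠ g 0 := Nat.find_spec hne
      have hmin : ∀ k, k < Nat.find hne → g k = g 0 :=
        fun k hk => not_not.mp (Nat.find_min hne hk)
      obtain ⟨m', hm'⟩ : ∃ m', Nat.find hne = m' + 1 := by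
        refine ⟨Nat.find hne - 1, ?_⟩
        have : Nat.find hne ≠ 0 := fun h => hm (by rw [h])
        omega
      rw [hm'] at hm hmin
      have hprev : g m' = g 0 := hmin m' (by omega)
      have hR : R (g (m' + 1)) x := by
        rcases hstep m' with he | hr
        · exact absurd (he.trans hprev) hm
        · rw [hprev, hg0] at hr; exact hr
      obtain ⟨M', h'⟩ := ih (g (m' + 1)) hR (fun n => g ((m' + 1) + n)) rfl
        (fun n => hstep ((m' + 1) + n))
      refine ⟨(m' + 1) + M', fun n => ?_⟩
      have := h' n
      simp only [Nat.add_assoc] at *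
      exact this

/-! ### Degree monotonicity along `pdLe` -/

theorem pdLe_degD {u v : OpWord Z} (h : pdLe u v) : wordDegD u ≤ wordDegD v := by
  rcases h with h | rfl
  · unfold pdLt at h
    rcases h with h | ⟨e, -⟩ <;> omega
  · exact le_rfl

theorem pdLe_degP {u v : OpWord Z} (h : pdLe u v) (e1 : wordDegD u = wordDegD v) :
    wordDegP u ≤ wordDegP v := by
  rcases h with h | rfl
  · unfold pdLt at h
    rcases h with h | ⟨-, h | ⟨e, -⟩⟩ <;> omega
  · exact le_rfl

theorem pdLe_degZ {u v : OpWord Z} (h : pdLe u v) (e1 : wordDegD u = wordDegD v)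
    (e2 : wordDegP u = wordDegP v) : wordDegZ u ≤ wordDegZ v := by
  rcases h with h | rfl
  · unfold pdLt at h
    rcases h with h | ⟨-, h | ⟨-, h | ⟨e, -⟩⟩⟩ <;> omega
  · exact le_rfl

theorem pdLe_degGD {u v : OpWord Z} (h : pdLe u v) (e1 : wordDegD u = wordDegD v)
    (e2 : wordDegP u = wordDegP v) (e3 : wordDegZ u = wordDegZ v) :
    wordDegGD u ≤ wordDegGD v := by
  rcases h with h | rfl
  · unfold pdLt at h
    rcases h with h | ⟨-, h | ⟨-, h | ⟨-, h | ⟨e, -⟩⟩⟩⟩ <;> omega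
  · exact le_rfl

theorem pdLe_degGP {u v : OpWord Z} (h : pdLe u v) (e1 : wordDegD u = wordDegD v)
    (e2 : wordDegP u = wordDegP v) (e3 : wordDegZ u = wordDegZ v)
    (e4 : wordDegGD u = wordDegGD v) : wordDegGP u ≤ wordDegGP v := by
  rcases h with h | rfl
  · unfold pdLt at h
    rcases h with h | ⟨-, h | ⟨-, h | ⟨-, h | ⟨-, h | ⟨e, -⟩⟩⟩⟩⟩ <;> omega
  · exact le_rfl

theorem pdLt_forces_dlex {u v : OpWord Z} (h : pdLt u v) (e1 : wordDegD u = wordDegD v)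
    (e2 : wordDegP u = wordDegP v) (e3 : wordDegZ u = wordDegZ v)
    (e4 : wordDegGD u = wordDegGD v) (e5 : wordDegGP u = wordDegGP v) :
    dlexLt u v := by
  unfold pdLt at h
  rcases h with h | ⟨-, h | ⟨-, h | ⟨-, h | ⟨-, h | ⟨-, h⟩⟩⟩⟩⟩
  · omega
  · omega
  · omega
  · omega
  · omega
  · exact h

/-! ### The descending chain condition for pdLe -/

theorem pdLe_dcc (f : ℕ → OpWord Z) (hf : ∀ n, pdLe (f (n + 1)) (f n)) :
    ∃ N, ∀ n, N ≤ n → f n = f N := by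
  -- peel degD
  obtain ⟨M1', h1'⟩ := natPeelShift (fun n => wordDegD (f n)) (fun n => pdLe_degD (hf n))
  have C1 : ∀ n, M1' ≤ n → wordDegD (f n) = wordDegD (f M1') := by
    intro n hn
    have := h1' (n - M1')
    rwa [show M1' + (n - M1') = n by omega] at this
  -- peel degP
  obtain ⟨M2', h2'⟩ := natPeelShift (fun n => wordDegP (f (M1' + n)))
    (fun n => by
      have step : pdLe (f (M1' + n + 1)) (f (M1' + n)) := hf (M1' + n)
      have e : wordDegD (f (M1' + n + 1)) = wordDegD (f (M1' + n)) :=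
        (C1 _ (by omega)).trans (C1 _ (by omega)).symm
      exact pdLe_degP step e)
  set M2 := M1' + M2' with hM2
  have C2 : ∀ n, M2 ≤ n → wordDegP (f n) = wordDegP (f M2) := by
    intro n hn
    have := h2' (n - M2)
    rwa [show M1' + (M2' + (n - M2)) = n by omega] at this
  -- peel degZ
  obtain ⟨M3', h3'⟩ := natPeelShift (fun n => wordDegZ (f (M2 + n)))
    (fun n => by
      have step : pdLe (f (M2 + n + 1)) (f (M2 + n)) := hf (M2 + n)
      have e1 : wordDegD (f (M2 + n + 1)) = wordDegD (f (M2 + n)) :=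
        (C1 _ (by omega)).trans (C1 _ (by omega)).symm
      have e2 : wordDegP (f (M2 + n + 1)) = wordDegP (f (M2 + n)) :=
        (C2 _ (by omega)).trans (C2 _ (by omega)).symm
      exact pdLe_degZ step e1 e2)
  set M3 := M2 + M3' with hM3
  have C3 : ∀ n, M3 ≤ n → wordDegZ (f n) = wordDegZ (f M3) := by
    intro n hn
    have := h3' (n - M3)
    rwa [show M2 + (M3' + (n - M3)) = n by omega] at this
  -- peel degGD
  obtain ⟨M4', h4'⟩ := natPeelShift (fun n => wordDegGD (f (M3 + n)))
    (fun n => by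
      have step : pdLe (f (M3 + n + 1)) (f (M3 + n)) := hf (M3 + n)
      have e1 : wordDegD (f (M3 + n + 1)) = wordDegD (f (M3 + n)) :=
        (C1 _ (by omega)).trans (C1 _ (by omega)).symm
      have e2 : wordDegP (f (M3 + n + 1)) = wordDegP (f (M3 + n)) :=
        (C2 _ (by omega)).trans (C2 _ (by omega)).symm
      have e3 : wordDegZ (f (M3 + n + 1)) = wordDegZ (f (M3 + n)) :=
        (C3 _ (by omega)).trans (C3 _ (by omega)).symm
      exact pdLe_degGD step e1 e2 e3)
  set M4 := M3 + M4' with hM4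
  have C4 : ∀ n, M4 ≤ n → wordDegGD (f n) = wordDegGD (f M4) := by
    intro n hn
    have := h4' (n - M4)
    rwa [show M3 + (M4' + (n - M4)) = n by omega] at this
  -- peel degGP
  obtain ⟨M5', h5'⟩ := natPeelShift (fun n => wordDegGP (f (M4 + n)))
    (fun n => by
      have step : pdLe (f (M4 + n + 1)) (f (M4 + n)) := hf (M4 + n)
      have e1 : wordDegD (f (M4 + n + 1)) = wordDegD (f (M4 + n)) :=
        (C1 _ (by omega)).trans (C1 _ (by omega)).symm
      have e2 : wordDegP (f (M4 + n + 1)) = wordDegP (f (M4 + n)) :=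
        (C2 _ (by omega)).trans (C2 _ (by omega)).symm
      have e3 : wordDegZ (f (M4 + n + 1)) = wordDegZ (f (M4 + n)) :=
        (C3 _ (by omega)).trans (C3 _ (by omega)).symm
      have e4 : wordDegGD (f (M4 + n + 1)) = wordDegGD (f (M4 + n)) :=
        (C4 _ (by omega)).trans (C4 _ (by omega)).symm
      exact pdLe_degGP step e1 e2 e3 e4)
  set M5 := M4 + M5' with hM5
  have C5 : ∀ n, M5 ≤ n → wordDegGP (f n) = wordDegGP (f M5) := by
    intro n hn
    have := h5' (n - M5)
    rwa [show M4 + (M5' + (n - M5)) = n by omega] at this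
  -- final dlex chain with bounded size
  have hsize : ∀ n, M5 ≤ n → sizeWord (f n) = sizeWord (f M5) := by
    intro n hn
    rw [sizeWord_eq, sizeWord_eq]
    rw [C1 n (by omega), C2 n (by omega), C3 n (by omega),
        C1 M5 (by omega), C2 M5 (by omega), C3 M5 (by omega)]
  obtain ⟨M6', h6⟩ := chainConst (f M5) (mainAcc (sizeWord (f M5)) (f M5) le_rfl)
    (fun n => f (M5 + n)) (by simp)
    (fun n => by
      rcases hf (M5 + n) with h | h
      · refine Or.inr ⟨?_, ?_⟩
        · refine pdLt_forces_dlex h ?_ ?_ ?_ ?_ ?_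
          · exact (C1 _ (by omega)).trans (C1 _ (by omega)).symm
          · exact (C2 _ (by omega)).trans (C2 _ (by omega)).symm
          · exact (C3 _ (by omega)).trans (C3 _ (by omega)).symm
          · exact (C4 _ (by omega)).trans (C4 _ (by omega)).symm
          · exact (C5 _ (by omega)).trans (C5 _ (by omega)).symm
        · exact le_of_eq (hsize (M5 + (n + 1)) (by omega))
      · exact Or.inl h)
  refine ⟨M5 + M6', fun n hn => ?_⟩
  have := h6 (n - (M5 + M6'))
  rwa [show M5 + (M6' + (n - (M5 + M6'))) = n by omega] at this

/-! ### Substitution monotonicity -/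

def sigmaSub (u : OpWord Z) : Option Z → OpWord Z :=
  fun oz => match oz with | some z => OpWord.ofL z | none => u

theorem substS_def (q : OpWord (Option Z)) (u : OpWord Z) :
    substS q u = wordSEval (sigmaSub u) q := rfl

mutual
theorem atomSEval_congr (u v : OpWord Z) : ∀ a : OpAtom (Option Z), atomSCount a = 0 →
    atomSEval (sigmaSub u) a = atomSEval (sigmaSub v) a
  | .letter none, h => absurd h (by simp [atomSCount])
  | .letter (some z), _ => rfl
  | .brD w, h => congrArg OpWord.opD (wordSEval_congr u v w h)
  | .brP w, h => congrArg OpWord.opP (wordSEval_congr u v w h)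
termination_by a => sizeOf a

theorem wordSEval_congr (u v : OpWord Z) : ∀ q : OpWord (Option Z), wordSCount q = 0 →
    wordSEval (sigmaSub u) q = wordSEval (sigmaSub v) q
  | .single a, h => atomSEval_congr u v a h
  | .cons a w, h => by
      have h1 : atomSCount a = 0 := by
        have : atomSCount a + wordSCount w = 0 := h
        omega
      have h2 : wordSCount w = 0 := by
        have : atomSCount a + wordSCount w = 0 := h
        omega
      show OpWord.mul (atomSEval (sigmaSub u) a) (wordSEval (sigmaSub u) w)
          = OpWord.mul (atomSEval (sigmaSub v) a) (wordSEval (sigmaSub v) w)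
      rw [atomSEval_congr u v a h1, wordSEval_congr u v w h2]
termination_by q => sizeOf q
end

mutual
theorem atomSEval_mono (u v : OpWord Z) (huv : pdLt u v) :
    ∀ a : OpAtom (Option Z), atomSCount a = 1 →
      pdLt (atomSEval (sigmaSub u) a) (atomSEval (sigmaSub v) a)
  | .letter none, _ => huv
  | .letter (some z), hc => absurd hc (by simp [atomSCount])
  | .brD w, hc => pdLt_opD (wordSEval_mono u v huv w hc)
  | .brP w, hc => pdLt_opP (wordSEval_mono u v huv w hc)
termination_by a => sizeOf a

theorem wordSEval_mono (u v : OpWord Z) (huv : pdLt u v) :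
    ∀ q : OpWord (Option Z), wordSCount q = 1 →
      pdLt (wordSEval (sigmaSub u) q) (wordSEval (sigmaSub v) q)
  | .single a, hc => atomSEval_mono u v huv a hc
  | .cons a w, hc => by
      have hsum : atomSCount a + wordSCount w = 1 := hc
      show pdLt ((atomSEval (sigmaSub u) a) * (wordSEval (sigmaSub u) w))
          ((atomSEval (sigmaSub v) a) * (wordSEval (sigmaSub v) w))
      rcases Nat.eq_zero_or_pos (atomSCount a) with h0 | h1
      · have hw : wordSCount w = 1 := by omega
        rw [atomSEval_congr u v a h0]
        exact pdLt_mul_left (wordSEval_mono u v huv w hw) _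
      · have ha : atomSCount a = 1 := by omega
        have hw : wordSCount w = 0 := by omega
        rw [wordSEval_congr u v w hw]
        exact pdLt_mul_right (atomSEval_mono u v huv a ha) _
termination_by q => sizeOf q
end

end PDAux


/-- For any set `Z` equipped with a well order, the well order `≤_PD`
is a monomial order on the free Ω-operated semigroup 𝔖(Z). -/
theorem pdLe_isMonomialOrder (Z : Type u) [LinearOrder Z] [WellFoundedLT Z] :
    IsMonomialOrderS (pdLe (Z := Z)) := by
  constructor
  · constructor
    · refine ⟨fun x => Or.inr rfl, ?_, ?_, ?_⟩
      · intro x y z hxy hyz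
        rcases hxy with h1 | rfl
        · rcases hyz with h2 | rfl
          · exact Or.inl (pdLt_trans h1 h2)
          · exact Or.inl h1
        · exact hyz
      · intro x y hxy hyx
        rcases hxy with h1 | rfl
        · rcases hyx with h2 | rfl
          · exact absurd (pdLt_trans h1 h2) (pdLt_irrefl x)
          · rfl
        · rfl
      · intro x y
        rcases pdLt_tri x y with h | h | h
        · exact Or.inl (Or.inl h)
        · exact Or.inl (Or.inr h)
        · exact Or.inr (Or.inl h)
    · exact fun f hf => pdLe_dcc f hf
  · intro q hq u v huv
    have hlt : pdLt u v := by
      rcases huv.1 with h | h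
      · exact h
      · exact absurd h huv.2
    have key : pdLt (substS q u) (substS q v) := wordSEval_mono u v hlt q hq
    exact ⟨Or.inl key, fun e => pdLt_irrefl _ (e ▸ key)⟩
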